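/- Let D ⊆ ℂ be a circular domain, let q be a monic complex polynomial of degree d ≥ 1, and let f, g be monic complex polynomials of degree n ≥ 1 without common zeros in q(D). If |f(z)| ≥ |g(z)| for every z ∈ q(D), then |S_{q,n}(f)(y₁,…,yₙ)| ≥ |S_{q,n}(g)(y₁,…,yₙ)| for all (y₁,…,yₙ) ∈ (q_∘(D))ⁿ. -/

import Mathlib

open Polynomial

/-- The apolarity form `[f,g]_m`. -/
noncomputable def apol (m : ℕ) (f g : Polynomial ℂ) : ℂ :=
  ∑ k ∈ Finset.range (m + 1),
    (-1 : ℂ) ^ k * ((m.choose k : ℂ))⁻¹ * f.coeff k * g.coeff (m - k)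

/-- The symmetrization `Sym_N(f)` of a polynomial, as a function on `ι → ℂ`
with `N = card ι`. -/
noncomputable def symFun {ι : Type*} [Fintype ι] (f : Polynomial ℂ) (y : ι → ℂ) : ℂ :=
  ∑ k ∈ Finset.range (Fintype.card ι + 1),
    (((Fintype.card ι).choose k : ℂ))⁻¹ * f.coeff k *
      MvPolynomial.eval y (MvPolynomial.esymm ι ℂ k)

/-- A circular domain: an open or closed disk or half-plane, or a complement thereof. -/
def IsCircularDomain (D : Set ℂ) : Prop :=
  ∃ (α γ : ℝ) (β : ℂ),
    D = {z : ℂ | α * Complex.normSq z + ((starRingEnd ℂ) β * z).re + γ < 0} ∨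
    D = {z : ℂ | α * Complex.normSq z + ((starRingEnd ℂ) β * z).re + γ ≤ 0}

/-- `q_∘(D) = {u : q⁻¹(u) ⊆ D}`. -/
def innerImage (q : Polynomial ℂ) (D : Set ℂ) : Set ℂ :=
  {u : ℂ | ∀ z : ℂ, q.eval z = u → z ∈ D}

/-- `S_{q,n}(f)(u₁,…,uₙ) = [f∘q, ∏ⱼ (q - uⱼ)]_{nd}`. -/
noncomputable def Sfun (q : Polynomial ℂ) (n : ℕ) (f : Polynomial ℂ) (u : Fin n → ℂ) : ℂ :=
  apol (n * q.natDegree) (f.comp q) (∏ j, (q - Polynomial.C (u j)))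

/-- The Fischer inner product `⟨f,g⟩_n`. -/
noncomputable def fischer (n : ℕ) (f g : Polynomial ℂ) : ℂ :=
  ∑ k ∈ Finset.range (n + 1),
    ((n.choose k : ℂ))⁻¹ * f.coeff k * (starRingEnd ℂ) (g.coeff k)

open Finset

noncomputable def polar (s : ℕ) (a : ℂ) (G : Polynomial ℂ) : Polynomial ℂ :=
  (s : ℂ) • G + (C a - X) * derivative G

lemma coeff_polar (s : ℕ) (a : ℂ) (G : Polynomial ℂ) (k : ℕ) :
    (polar s a G).coeff k = ((s : ℂ) - k) * G.coeff k + a * (k+1) * G.coeff (k+1) := by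
  simp only [polar, coeff_add, coeff_smul, smul_eq_mul, sub_mul, coeff_sub,
    coeff_C_mul, coeff_derivative]
  cases k with
  | zero => simp
  | succ k => rw [coeff_X_mul, coeff_derivative]; push_cast; ring

lemma apol_step (s : ℕ) (a : ℂ) (f g : Polynomial ℂ) (hf : f.natDegree ≤ s) :
    apol (s+1) ((X - C a) * f) g = -(1/(s+1)) * apol s f (polar (s+1) a g) := by
  unfold apol
  have key : ∀ k, ((X - C a) * f).coeff k
      = (if k = 0 then 0 else f.coeff (k-1)) - a * f.coeff k := by
    intro k
    rw [sub_mul, coeff_sub, coeff_C_mul]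
    cases k with
    | zero => simp
    | succ k => rw [coeff_X_mul]; simp
  simp only [key]
  have split : ∀ k ∈ range (s+2),
      (-1 : ℂ) ^ k * (((s+1).choose k : ℂ))⁻¹ *
        ((if k = 0 then 0 else f.coeff (k-1)) - a * f.coeff k) * g.coeff (s+1-k)
      = ((-1 : ℂ) ^ k * (((s+1).choose k : ℂ))⁻¹ * (if k = 0 then 0 else f.coeff (k-1)) * g.coeff (s+1-k))
        - ((-1 : ℂ) ^ k * (((s+1).choose k : ℂ))⁻¹ * (a * f.coeff k) * g.coeff (s+1-k)) := by
    intro k _; ring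
  rw [Finset.sum_congr rfl split, Finset.sum_sub_distrib]
  rw [Finset.sum_range_succ' (fun k => (-1 : ℂ) ^ k * (((s+1).choose k : ℂ))⁻¹ *
        (if k = 0 then 0 else f.coeff (k-1)) * g.coeff (s+1-k))]
  rw [Finset.sum_range_succ (fun k => (-1 : ℂ) ^ k * (((s+1).choose k : ℂ))⁻¹ *
        (a * f.coeff k) * g.coeff (s+1-k))]
  rw [coeff_eq_zero_of_natDegree_lt (Nat.lt_succ_of_le hf)]
  simp only [if_pos trivial, mul_zero, zero_mul, add_zero, Nat.add_sub_cancel]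
  rw [Finset.mul_sum, ← Finset.sum_sub_distrib]
  refine Finset.sum_congr rfl ?_
  intro j hj
  rw [Finset.mem_range] at hj
  have hj' : j ≤ s := by omega
  have e1 : s + 1 - (j+1) = s - j := by omega
  have e3 : (s - j) + 1 = s + 1 - j := by omega
  have c0 : ((s:ℂ)+1) ≠ 0 := by exact_mod_cast Nat.succ_ne_zero s
  have cs : ((s.choose j : ℕ) : ℂ) ≠ 0 := Nat.cast_ne_zero.mpr (Nat.choose_pos hj').ne'
  have c1 : (((s+1).choose (j+1) : ℕ) : ℂ) ≠ 0 := Nat.cast_ne_zero.mpr (Nat.choose_pos (by omega)).ne'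
  have c2 : (((s+1).choose j : ℕ) : ℂ) ≠ 0 := Nat.cast_ne_zero.mpr (Nat.choose_pos (by omega)).ne'
  have hn1 : ((s:ℂ)+1) * (s.choose j : ℂ) = ((s+1).choose (j+1) : ℂ) * ((j:ℂ)+1) := by
    have := congrArg (Nat.cast : ℕ → ℂ) (Nat.add_one_mul_choose_eq s j)
    push_cast at this
    linear_combination this
  have hn2 : ((s+1).choose (j+1) : ℂ) * ((j:ℂ)+1) = ((s+1).choose j : ℂ) * ((s:ℂ)+1-j) := by
    have := congrArg (Nat.cast : ℕ → ℂ) (Nat.choose_succ_right_eq (s+1) j)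
    push_cast [Nat.cast_sub (by omega : j ≤ s+1)] at this
    linear_combination this
  have h1 : (((s+1).choose (j+1) : ℂ))⁻¹ = ((j:ℂ)+1) / (((s:ℂ)+1) * (s.choose j : ℂ)) := by
    rw [eq_div_iff (mul_ne_zero c0 cs), inv_mul_eq_div, div_eq_iff c1]
    linear_combination hn1
  have h2 : (((s+1).choose j : ℂ))⁻¹ = (((s:ℂ)+1-j)) / (((s:ℂ)+1) * (s.choose j : ℂ)) := by
    rw [eq_div_iff (mul_ne_zero c0 cs), inv_mul_eq_div, div_eq_iff c2]
    linear_combination hn1.trans hn2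
  rw [e1, coeff_polar, e3, if_neg (by omega : ¬(j+1=0))]
  push_cast [Nat.cast_sub hj', Nat.cast_sub (by omega : j ≤ s+1)]
  rw [h1, h2]
  field_simp
  ring

lemma logderiv (m : Multiset ℂ) (z : ℂ) (h : ∀ b ∈ m, z - b ≠ 0) :
    (derivative (m.map fun b => X - C b).prod).eval z
      = ((m.map fun b => X - C b).prod.eval z) * (m.map fun b => (z - b)⁻¹).sum := by
  induction m using Multiset.induction_on with
  | empty => simp
  | cons b m ih =>
      have hb : z - b ≠ 0 := h b (Multiset.mem_cons_self b m)
      have hm : ∀ x ∈ m, z - x ≠ 0 := fun x hx => h x (Multiset.mem_cons_of_mem hx)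
      simp only [Multiset.map_cons, Multiset.prod_cons, derivative_mul, Multiset.sum_cons,
        eval_add, eval_mul, eval_sub, eval_X, eval_C, derivative_sub, derivative_X,
        derivative_C, sub_zero, eval_one, one_mul, ih hm]
      field_simp

lemma concaveQuad (c : ℝ) (hc : c ≤ 0) (d : ℂ) (e : ℝ) :
    ConcaveOn ℝ Set.univ (fun w : ℂ => c * Complex.normSq w + (d * w).re + e) := by
  constructor
  · exact convex_univ
  · intro x _ y _ a b ha hb hab
    have hb' : b = 1 - a := by linarith
    subst hb'
    simp only [smul_eq_mul, Complex.normSq_apply, Complex.add_re, Complex.add_im,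
      Complex.mul_re, Complex.mul_im, Complex.smul_re, Complex.smul_im]
    have h2 : 0 ≤ a * (1-a) := mul_nonneg ha hb
    have h1 : 0 ≤ (-c) * ((a*(1-a))*((x.re-y.re)^2+(x.im-y.im)^2)) :=
      mul_nonneg (by linarith) (mul_nonneg h2 (by positivity))
    nlinarith [h1]

lemma convexW (strict : Bool) (c : ℝ) (hc : c ≤ 0) (d : ℂ) (e : ℝ) :
    Convex ℝ {w : ℂ | ¬ (bif strict then c * Complex.normSq w + (d * w).re + e < 0
        else c * Complex.normSq w + (d * w).re + e ≤ 0)} := by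
  cases strict with
  | true =>
      have := (concaveQuad c hc d e).convex_ge 0
      simp only [Set.mem_univ, true_and, cond] at this ⊢
      convert this using 1
      ext w; simp [not_lt]
  | false =>
      have := (concaveQuad c hc d e).convex_gt 0
      simp only [Set.mem_univ, true_and, cond] at this ⊢
      convert this using 1
      ext w; simp [not_le]
      ext w; exact not_le

lemma avg_mem {W : Set ℂ} (hW : Convex ℝ W) (m : Multiset ℂ) (hm : ∀ x ∈ m, x ∈ W)
    (hpos : m ≠ 0) : ((Multiset.card m : ℝ))⁻¹ • m.sum ∈ W := by
  classical
  have hcard : 0 < Multiset.card m := Multiset.card_pos.mpr hpos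
  have hlen : m.toList.length = Multiset.card m := Multiset.length_toList m
  rw [← Multiset.sum_toList m, ← Fin.sum_univ_getElem, Finset.smul_sum]
  apply hW.sum_mem
  · intro i _; positivity
  · rw [Finset.sum_const, Finset.card_univ, Fintype.card_fin, hlen, nsmul_eq_mul]
    have : (Multiset.card m : ℝ) ≠ 0 := by exact_mod_cast hcard.ne'
    field_simp
  · intro i _
    exact hm _ ((Multiset.mem_toList).mp (List.getElem_mem _))


/-- The defining quadratic of a circular domain. -/
def Fq (al ga : ℝ) (be : ℂ) (z : ℂ) : ℝ :=
  al * Complex.normSq z + ((starRingEnd ℂ) be * z).re + ga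

def mem0 (strict : Bool) (x : ℝ) : Prop := bif strict then x < 0 else x ≤ 0

lemma key_id (al ga : ℝ) (be : ℂ) (z₀ w : ℂ) (hw : w ≠ 0) :
    Fq al ga be (z₀ - w⁻¹) * Complex.normSq w
      = (Fq al ga be z₀) * Complex.normSq w - ((2*(al:ℂ)*z₀ + be) * w).re + al := by
  have hns : Complex.normSq w ≠ 0 := by
    simpa [Complex.normSq_eq_zero] using hw
  have hns' : w.re * w.re + w.im * w.im ≠ 0 := by
    simpa [Complex.normSq_apply] using hns
  have hns'' : w.re ^ 2 + w.im ^ 2 ≠ 0 := by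
    simpa [sq] using hns'
  simp only [Fq, Complex.normSq_apply, Complex.sub_re, Complex.sub_im, Complex.inv_re,
    Complex.inv_im, Complex.mul_re, Complex.mul_im, Complex.add_re, Complex.add_im,
    Complex.ofReal_re, Complex.ofReal_im, Complex.conj_re, Complex.conj_im,
    Complex.normSq_apply, Complex.re_ofNat, Complex.im_ofNat]
  field_simp
  ring


lemma mem0_le {b : Bool} {x : ℝ} (h : mem0 b x) : x ≤ 0 := by
  cases b <;> simp [mem0] at h <;> linarith

lemma mem0_mul_pos {b : Bool} {x t : ℝ} (h : mem0 b x) (ht : 0 < t) : mem0 b (x*t) := by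
  cases b <;> simp [mem0] at h ⊢
  · exact mul_nonpos_of_nonpos_of_nonneg h ht.le
  · exact mul_neg_of_neg_of_pos h ht

lemma not_mem0_mul_pos {b : Bool} {x t : ℝ} (h : ¬ mem0 b x) (ht : 0 < t) :
    ¬ mem0 b (x*t) := by
  cases b <;> simp [mem0, not_le, not_lt] at h ⊢
  · exact mul_pos h ht
  · exact mul_nonneg h ht.le
def CC (strict : Bool) (al ga : ℝ) (be : ℂ) : Set ℂ := {z | mem0 strict (Fq al ga be z)}

lemma eval_polar (s : ℕ) (a : ℂ) (G : Polynomial ℂ) (z : ℂ) :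
    (polar s a G).eval z = (s:ℂ) * G.eval z + (a - z) * (derivative G).eval z := by
  simp [polar]

lemma card_roots_complex (G : Polynomial ℂ) :
    Multiset.card G.roots = G.natDegree := by
  rw [(IsAlgClosed.splits G).natDegree_eq_card_roots]

lemma natDegree_polar_le (s : ℕ) (a : ℂ) (G : Polynomial ℂ) (hG : G.natDegree ≤ s + 1) :
    (polar (s+1) a G).natDegree ≤ s := by
  rw [natDegree_le_iff_coeff_eq_zero] at hG ⊢
  intro N hN
  rcases eq_or_lt_of_le (Nat.succ_le_of_lt hN) with h | h
  · rw [coeff_polar, ← h, hG (s+1+1) (by omega)]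
    push_cast; ring
  · rw [coeff_polar, hG N (by omega), hG (N+1) (by omega)]; ring

lemma step (strict : Bool) (al ga : ℝ) (be : ℂ) (s : ℕ) (a : ℂ)
    (ha : a ∈ CC strict al ga be) (G : Polynomial ℂ)
    (hG0 : G ≠ 0) (hGdeg : G.natDegree ≤ s + 1)
    (hGz : ∀ z ∈ CC strict al ga be, G.eval z ≠ 0)
    (halt : ¬ mem0 strict al ∨ G.natDegree = s + 1) :
    (polar (s+1) a G ≠ 0) ∧ (polar (s+1) a G).natDegree ≤ s ∧
    (∀ z ∈ CC strict al ga be, (polar (s+1) a G).eval z ≠ 0) ∧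
    (¬ mem0 strict al ∨ (polar (s+1) a G).natDegree = s) := by
  classical
  have hsC : ((s:ℂ)+1) ≠ 0 := by exact_mod_cast Nat.succ_ne_zero s
  have hGa : G.eval a ≠ 0 := hGz a ha
  set c := G.leadingCoeff with hcdef
  have hc : c ≠ 0 := leadingCoeff_ne_zero.mpr hG0
  have hroots_not : ∀ b ∈ G.roots, ¬ mem0 strict (Fq al ga be b) := by
    intro b hb hmem
    exact hGz b hmem (isRoot_of_mem_roots hb)
  -- Part A : no zeros in C
  have partA : ∀ z ∈ CC strict al ga be, (polar (s+1) a G).eval z ≠ 0 := by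
    intro z₀ hz₀ hpe
    have hGz₀ : G.eval z₀ ≠ 0 := hGz z₀ hz₀
    rw [eval_polar] at hpe
    push_cast at hpe
    -- hpe : (↑s+1) * G.eval z₀ + (a - z₀) * (derivative G).eval z₀ = 0
    have hza : z₀ - a ≠ 0 := by
      intro h
      have hz : z₀ = a := by linear_combination h
      subst hz
      apply hGz₀
      have : ((s:ℂ)+1) * G.eval z₀ = 0 := by linear_combination hpe
      exact (mul_eq_zero.mp this).resolve_left hsC
    have hbz : ∀ b ∈ G.roots, z₀ - b ≠ 0 := by
      intro b hb h0
      have hz : z₀ = b := by linear_combination h0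
      subst hz
      exact hroots_not z₀ hb hz₀
    have hfact : G = C c * (G.roots.map fun b => X - C b).prod :=
      (IsAlgClosed.splits G).eq_prod_roots
    set R := (G.roots.map fun b => X - C b).prod with hRdef
    set Sg := (G.roots.map fun b => (z₀ - b)⁻¹).sum with hSdef
    have e1 : G.eval z₀ = c * R.eval z₀ := by conv_lhs => rw [hfact]; rw [eval_mul, eval_C]
    have hR : R.eval z₀ ≠ 0 := by
      intro h0; apply hGz₀; rw [e1, h0, mul_zero]
    have hld := logderiv G.roots z₀ hbz
    have e2 : (derivative G).eval z₀ = c * (R.eval z₀ * Sg) := by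
      conv_lhs => rw [hfact]
      rw [derivative_C_mul, eval_mul, eval_C, hld]
    rw [e1, e2] at hpe
    have h3 : (c * R.eval z₀) * (((s:ℂ)+1) + (a - z₀) * Sg) = 0 := by linear_combination hpe
    have hkey : ((s:ℂ)+1) + (a - z₀) * Sg = 0 :=
      (mul_eq_zero.mp h3).resolve_left (mul_ne_zero hc hR)
    have hSg2 : Sg = ((s:ℂ)+1) * (z₀ - a)⁻¹ := by
      have h4 : Sg * (z₀ - a) = ((s:ℂ)+1) := by linear_combination -hkey
      field_simp [hza]
      linear_combination h4
    -- region setup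
    set c₀ := Fq al ga be z₀ with hc₀def
    set dd := -(2*(al:ℂ)*z₀ + be) with hdddef
    have hc₀le : c₀ ≤ 0 := mem0_le hz₀
    set W := {w : ℂ | ¬ mem0 strict (c₀ * Complex.normSq w + (dd * w).re + al)} with hWdef
    have hWconv : Convex ℝ W := convexW strict c₀ hc₀le dd al
    have hgw : ∀ w : ℂ, w ≠ 0 →
        c₀ * Complex.normSq w + (dd * w).re + al
          = Fq al ga be (z₀ - w⁻¹) * Complex.normSq w := by
      intro w hw
      have hk := key_id al ga be z₀ w hw
      rw [hk, hdddef]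
      simp only [neg_mul, Complex.neg_re]
      ring
    have hmemW : ∀ b ∈ G.roots, (z₀ - b)⁻¹ ∈ W := by
      intro b hb
      have hbne : z₀ - b ≠ 0 := hbz b hb
      have hw : (z₀ - b)⁻¹ ≠ 0 := inv_ne_zero hbne
      show ¬ mem0 strict _
      rw [hgw _ hw]
      have hbb : z₀ - ((z₀ - b)⁻¹)⁻¹ = b := by rw [inv_inv]; ring
      rw [hbb]
      exact not_mem0_mul_pos (hroots_not b hb) (Complex.normSq_pos.mpr hw)
    set M := Multiset.map (fun b => (z₀ - b)⁻¹) G.roots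
        + Multiset.replicate (s + 1 - G.natDegree) (0:ℂ) with hMdef
    have hMcard : Multiset.card M = s+1 := by
      rw [hMdef, Multiset.card_add, Multiset.card_map, Multiset.card_replicate,
        card_roots_complex]
      omega
    have hMmem : ∀ x ∈ M, x ∈ W := by
      intro x hx
      rcases Multiset.mem_add.mp hx with h | h
      · rcases Multiset.mem_map.mp h with ⟨b, hb, rfl⟩
        exact hmemW b hb
      · have hx0 : x = 0 := Multiset.eq_of_mem_replicate h
        subst hx0
        rcases halt with hP | hdeq
        · show ¬ mem0 strict _
          have e : c₀ * Complex.normSq 0 + (dd * 0).re + al = al := by simp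
          rw [e]; exact hP
        · rw [hdeq, Nat.sub_self, Multiset.replicate_zero] at h
          exact absurd h (Multiset.notMem_zero 0)
    have hMsum : M.sum = ((s:ℂ)+1) * (z₀ - a)⁻¹ := by
      rw [hMdef, Multiset.sum_add, Multiset.sum_replicate, smul_zero, add_zero, ← hSdef, hSg2]
    have hM0 : M ≠ 0 := by
      intro h; rw [h] at hMcard; simp at hMcard
    have havg := avg_mem hWconv M hMmem hM0
    rw [hMcard, hMsum] at havg
    have hval : (((s+1:ℕ):ℝ))⁻¹ • (((s:ℂ)+1) * (z₀ - a)⁻¹) = (z₀ - a)⁻¹ := by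
      rw [Complex.real_smul]
      push_cast
      rw [inv_mul_cancel_left₀ hsC]
    rw [hval] at havg
    -- but (z₀-a)⁻¹ should NOT be in W
    apply havg
    show mem0 strict _
    have hw : (z₀ - a)⁻¹ ≠ 0 := inv_ne_zero hza
    rw [hgw _ hw]
    have hbb : z₀ - ((z₀ - a)⁻¹)⁻¹ = a := by rw [inv_inv]; ring
    rw [hbb]
    exact mem0_mul_pos ha (Complex.normSq_pos.mpr hw)
  -- Part B : polar ≠ 0
  have partB : polar (s+1) a G ≠ 0 := by
    intro h0
    have he : (polar (s+1) a G).eval a = 0 := by rw [h0]; simp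
    rw [eval_polar] at he
    push_cast at he
    have : ((s:ℂ)+1) * G.eval a = 0 := by linear_combination he
    exact hGa ((mul_eq_zero.mp this).resolve_left hsC)
  -- Part C : degree invariant
  have partC : ¬ mem0 strict al ∨ (polar (s+1) a G).natDegree = s := by
    by_cases hP : mem0 strict al
    · right
      have hdeq : G.natDegree = s + 1 := halt.resolve_left (by simpa using hP)
      -- convexity of the complement
      have hKconv : Convex ℝ {z : ℂ | ¬ mem0 strict (Fq al ga be z)} :=
        convexW strict al (mem0_le hP) ((starRingEnd ℂ) be) ga
      have hr0 : G.roots ≠ 0 := by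
        intro h
        have := card_roots_complex G
        rw [h, hdeq] at this
        simp at this
      have hcent := avg_mem hKconv G.roots hroots_not hr0
      rw [card_roots_complex, hdeq] at hcent
      have haK : a ≠ (((s+1:ℕ):ℝ))⁻¹ • G.roots.sum := by
        intro h
        rw [← h] at hcent
        exact hcent ha
      -- sum of roots
      have hmon : (G * C c⁻¹).Monic := monic_mul_leadingCoeff_inv hG0
      have hnd : (G * C c⁻¹).natDegree = s + 1 := by
        rw [natDegree_mul_C (inv_ne_zero hc), hdeq]
      have hnsum := (IsAlgClosed.splits _).nextCoeff_eq_neg_sum_roots_of_monic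
        hmon
      rw [nextCoeff_of_natDegree_pos (by omega), hnd] at hnsum
      have hroots_eq : (G * C c⁻¹).roots = G.roots := by
        rw [mul_comm]; exact roots_C_mul _ (inv_ne_zero hc)
      rw [hroots_eq] at hnsum
      simp only [Nat.add_sub_cancel, coeff_mul_C] at hnsum
      -- hnsum : G.coeff s * c⁻¹ = - G.roots.sum
      have hlead : G.coeff (s+1) = c := by rw [← hdeq]; exact coeff_natDegree
      have hco : (polar (s+1) a G).coeff s ≠ 0 := by
        rw [coeff_polar]
        push_cast
        intro h0
        apply haK
        have hGs : G.coeff s = -c * G.roots.sum := by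
          field_simp at hnsum
          linear_combination hnsum
        rw [hGs, hlead] at h0
        -- h0 : (s+1-s) * (-c * sum) + a*(s+1)*c = 0
        have hsum_eq : G.roots.sum = ((s:ℂ)+1) * a := by
          have hc' := hc
          field_simp at h0
          -- solve
          have : c * (((s:ℂ)+1) * a - G.roots.sum) = 0 := by linear_combination h0
          have h2 := (mul_eq_zero.mp this).resolve_left hc
          linear_combination -h2
        rw [hsum_eq, Complex.real_smul]
        push_cast
        rw [inv_mul_cancel_left₀ hsC]
      exact le_antisymm (natDegree_polar_le s a G hGdeg) (le_natDegree_of_ne_zero hco)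
    · exact Or.inl hP
  exact ⟨partB, natDegree_polar_le s a G hGdeg, partA, partC⟩
lemma grace (strict : Bool) (al ga : ℝ) (be : ℂ) (ms : Multiset ℂ)
    (hms : ∀ x ∈ ms, x ∈ CC strict al ga be) (G : Polynomial ℂ) (hG0 : G ≠ 0)
    (hdeg : G.natDegree ≤ Multiset.card ms)
    (hz : ∀ z ∈ CC strict al ga be, G.eval z ≠ 0)
    (halt : ¬ mem0 strict al ∨ G.natDegree = Multiset.card ms) :
    apol (Multiset.card ms) ((ms.map fun x => X - C x).prod) G ≠ 0 := by
  induction ms using Multiset.induction_on generalizing G with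
  | empty =>
      intro h0
      simp [apol] at h0
      apply hG0
      have hC := eq_C_of_natDegree_le_zero (le_trans hdeg (by simp))
      rw [hC, h0, map_zero]
  | cons a ms ih =>
      simp only [Multiset.card_cons] at hdeg halt ⊢
      simp only [Multiset.map_cons, Multiset.prod_cons]
      rw [apol_step (Multiset.card ms) a _ G
        (by rw [natDegree_multiset_prod_X_sub_C_eq_card])]
      have hfac : -(1/((Multiset.card ms : ℂ)+1)) ≠ 0 := by
        rw [neg_ne_zero, one_div, ne_eq, inv_eq_zero]
        exact_mod_cast Nat.succ_ne_zero (Multiset.card ms)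
      apply mul_ne_zero hfac
      obtain ⟨h1, h2, h3, h4⟩ := step strict al ga be (Multiset.card ms) a
        (hms a (Multiset.mem_cons_self a ms)) G hG0 hdeg hz halt
      exact ih (fun x hx => hms x (Multiset.mem_cons_of_mem hx)) _ h1 h2 h3 h4

lemma apol_comm (m : ℕ) (f g : Polynomial ℂ) :
    apol m f g = (-1)^m * apol m g f := by
  unfold apol
  rw [Finset.mul_sum, ← Finset.sum_range_reflect]
  apply Finset.sum_congr rfl
  intro k hk
  rw [Finset.mem_range] at hk
  have hk' : k ≤ m := by omega
  have e1 : m + 1 - 1 - k = m - k := by omega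
  have e2 : m - (m - k) = k := by omega
  have e3 : m.choose (m - k) = m.choose k := Nat.choose_symm hk'
  have e4 : ((-1:ℂ))^(m-k) = (-1)^m * (-1)^k := by
    have h5 : m + k = (m - k) + 2*k := by omega
    have : ((-1:ℂ))^(m+k) = (-1)^(m-k) := by
      rw [h5, pow_add, pow_mul, neg_one_sq, one_pow, mul_one]
    rw [← this, pow_add]
  rw [e1, e2, e3, e4]
  ring

lemma Sfun_sub (q : Polynomial ℂ) (n : ℕ) (f g : Polynomial ℂ) (lam : ℂ) (y : Fin n → ℂ) :
    Sfun q n (f - C lam * g) y = Sfun q n f y - lam * Sfun q n g y := by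
  unfold Sfun apol
  rw [Finset.mul_sum, ← Finset.sum_sub_distrib]
  apply Finset.sum_congr rfl
  intro k _
  rw [sub_comp, mul_comp, C_comp, coeff_sub, coeff_C_mul]
  ring

lemma key_nonzero (strict : Bool) (al ga : ℝ) (be : ℂ)
    (d : ℕ) (hd : 1 ≤ d) (q : Polynomial ℂ) (hq : q.Monic) (hqd : q.natDegree = d)
    (n : ℕ) (hn : 1 ≤ n) (h : Polynomial ℂ) (hdeg : h.natDegree = n)
    (hzero : ∀ w ∈ CC strict al ga be, h.eval (q.eval w) ≠ 0)
    (y : Fin n → ℂ) (hy : ∀ k, y k ∈ innerImage q (CC strict al ga be)) :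
    Sfun q n h y ≠ 0 := by
  have hnd : 1 ≤ n * d := Nat.mul_pos hn hd
  set G := h.comp q with hGdef
  have hGdeg : G.natDegree = n * d := by rw [hGdef, natDegree_comp, hdeg, hqd]
  have hG0 : G ≠ 0 := by
    intro h0
    rw [h0, natDegree_zero] at hGdeg
    omega
  have hGz : ∀ z ∈ CC strict al ga be, G.eval z ≠ 0 := by
    intro z hz
    rw [hGdef, eval_comp]
    exact hzero z hz
  set P := ∏ j, (q - C (y j)) with hPdef
  have hmonj : ∀ j : Fin n, (q - C (y j)).Monic := by
    intro j
    apply hq.sub_of_left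
    apply lt_of_le_of_lt degree_C_le
    rw [degree_eq_natDegree hq.ne_zero, hqd]
    exact_mod_cast hd
  have hPm : P.Monic := monic_prod_of_monic _ _ (fun j _ => hmonj j)
  have hPdeg : P.natDegree = n * d := by
    rw [hPdef, natDegree_prod _ _ (fun j _ => (hmonj j).ne_zero)]
    simp [natDegree_sub_C, hqd, Finset.sum_const, Finset.card_univ, mul_comm]
  have hProots : ∀ r ∈ P.roots, r ∈ CC strict al ga be := by
    intro r hr
    have hre : P.eval r = 0 := isRoot_of_mem_roots hr
    rw [hPdef, eval_prod] at hre
    rcases Finset.prod_eq_zero_iff.mp hre with ⟨j, _, hj⟩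
    simp only [eval_sub, eval_C, sub_eq_zero] at hj
    exact hy j r hj
  have hPcard : Multiset.card P.roots = n * d := by rw [card_roots_complex, hPdeg]
  have hPfact : P = (P.roots.map fun x => X - C x).prod :=
    (IsAlgClosed.splits P).eq_prod_roots_of_monic hPm
  have hg := grace strict al ga be P.roots hProots G hG0 (by rw [hGdeg, hPcard]) hGz
    (Or.inr (by rw [hGdeg, hPcard]))
  rw [hPcard, ← hPfact] at hg
  unfold Sfun
  rw [hqd, apol_comm]
  exact mul_ne_zero (pow_ne_zero _ (by norm_num)) hg


theorem stmt_13 (D : Set ℂ) (hD : IsCircularDomain D)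
    (d : ℕ) (hd : 1 ≤ d) (q : Polynomial ℂ) (hq : q.Monic) (hqd : q.natDegree = d)
    (n : ℕ) (hn : 1 ≤ n)
    (f g : Polynomial ℂ) (hfm : f.Monic) (hf : f.natDegree = n)
    (hgm : g.Monic) (hg : g.natDegree = n)
    (hcommon : ∀ u ∈ (fun w => q.eval w) '' D, ¬(f.eval u = 0 ∧ g.eval u = 0))
    (hmaj : ∀ z ∈ (fun w => q.eval w) '' D, ‖g.eval z‖ ≤ ‖f.eval z‖)
    (y : Fin n → ℂ) (hy : ∀ k, y k ∈ innerImage q D) :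
    ‖Sfun q n g y‖ ≤ ‖Sfun q n f y‖ := by
  obtain ⟨al, ga, be, hD'⟩ := hD
  have hDC : ∃ strict : Bool, D = CC strict al ga be := by
    rcases hD' with h | h
    · exact ⟨true, h⟩
    · exact ⟨false, h⟩
  obtain ⟨strict, hDeq⟩ := hDC
  subst hDeq
  have hstep : ∀ lam : ℂ, ‖lam‖ < 1 →
      Sfun q n f y - lam * Sfun q n g y ≠ 0 := by
    intro lam hlam
    rw [← Sfun_sub]
    have hfn : f.coeff n = 1 := by rw [← hf]; exact hfm
    have hgn : g.coeff n = 1 := by rw [← hg]; exact hgm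
    have hlamne : lam ≠ 1 := by intro h0; rw [h0] at hlam; simp at hlam
    have hlam1 : (1:ℂ) - lam ≠ 0 := sub_ne_zero_of_ne (Ne.symm hlamne)
    have hcoeff : (f - C lam * g).coeff n = 1 - lam := by
      rw [coeff_sub, coeff_C_mul, hfn, hgn, mul_one]
    have hdeg : (f - C lam * g).natDegree = n := by
      apply le_antisymm
      · apply le_trans (natDegree_sub_le f (C lam * g))
        exact max_le (le_of_eq hf) (le_trans (natDegree_C_mul_le _ _) (le_of_eq hg))
      · exact le_natDegree_of_ne_zero (by rw [hcoeff]; exact hlam1)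
    have hzero : ∀ w ∈ CC strict al ga be, (f - C lam * g).eval (q.eval w) ≠ 0 := by
      intro w hw h0
      set u := q.eval w with hudef
      have hu : u ∈ (fun w => q.eval w) '' (CC strict al ga be) := ⟨w, hw, rfl⟩
      rw [eval_sub, eval_mul, eval_C, sub_eq_zero] at h0
      by_cases hfu : f.eval u = 0
      · have hgu0 : ‖g.eval u‖ ≤ 0 := by
          have := hmaj u hu
          rw [hfu, norm_zero] at this
          exact this
        have hgu : g.eval u = 0 :=
          norm_eq_zero.mp (le_antisymm hgu0 (norm_nonneg _))
        exact hcommon u hu ⟨hfu, hgu⟩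
      · have hgu : g.eval u ≠ 0 := by
          intro h1
          apply hfu
          rw [h0, h1, mul_zero]
        have h1 : ‖f.eval u‖ = ‖lam‖ * ‖g.eval u‖ := by
          rw [h0, norm_mul]
        have h2 := hmaj u hu
        have h3 : 0 < ‖g.eval u‖ := norm_pos_iff.mpr hgu
        nlinarith [norm_nonneg lam]
    exact key_nonzero strict al ga be d hd q hq hqd n hn _ hdeg hzero y hy
  by_contra habs
  push_neg at habs
  have hB : Sfun q n g y ≠ 0 := by
    intro h0
    rw [h0, norm_zero] at habs
    exact absurd habs (not_lt.mpr (norm_nonneg _))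
  have hl : ‖Sfun q n f y / Sfun q n g y‖ < 1 := by
    rw [norm_div, div_lt_one (norm_pos_iff.mpr hB)]
    exact habs
  apply hstep _ hl
  rw [div_mul_cancel₀ _ hB, sub_self]
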